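/- Let (A, B, C, D) be a stable unitary realization with state dimension n and input/output dimension m. Then for every z ∈ ℂ with |z| = 1, the matrix I − z·A is invertible and the m×m matrix Θ(z) = D + z·C (I − z·A)⁻¹ B is unitary. -/

import Mathlib

open Matrix

/-- If `(A, B, C, D)` is a stable unitary realization, then for every `z` on the
unit circle the matrix `I - z•A` is invertible and `Θ(z) = D + z C (I - z A)⁻¹ B`
is unitary. -/
theorem stmt_4 {n m : ℕ}
    (A : Matrix (Fin n) (Fin n) ℂ) (B : Matrix (Fin n) (Fin m) ℂ)
    (C : Matrix (Fin m) (Fin n) ℂ) (D : Matrix (Fin m) (Fin m) ℂ)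
    (h_unitary : fromBlocks A B C D ∈ Matrix.unitaryGroup (Fin n ⊕ Fin m) ℂ)
    (h_stable : ∀ μ ∈ spectrum ℂ A, ‖μ‖ < 1)
    (z : ℂ) (hz : ‖z‖ = 1) :
    IsUnit (1 - z • A) ∧
      D + z • (C * (1 - z • A)⁻¹ * B) ∈ Matrix.unitaryGroup (Fin m) ℂ := by
  -- basic scalar facts
  have hz0 : z ≠ 0 := by intro h; simp [h] at hz
  have hzz : star z * z = 1 := by
    rw [Complex.star_def, ← Complex.normSq_eq_conj_mul_self]
    norm_cast
    rw [Complex.normSq_eq_norm_sq]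
    simp [hz]
  have hzz' : z * star z = 1 := by rw [mul_comm]; exact hzz
  -- invertibility of 1 - z • A
  have hinv : IsUnit (1 - z • A) := by
    have hfact : (1 : Matrix (Fin n) (Fin n) ℂ) - z • A = z • (z⁻¹ • 1 - A) := by
      rw [smul_sub, smul_smul, mul_inv_cancel₀ hz0, one_smul]
    have hspec : (z⁻¹ : ℂ) ∉ spectrum ℂ A := by
      intro h
      have := h_stable _ h
      rw [norm_inv, hz, inv_one] at this
      exact lt_irrefl _ this
    rw [spectrum.mem_iff, not_not, Algebra.algebraMap_eq_smul_one] at hspec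
    rw [hfact, Matrix.isUnit_iff_isUnit_det, Matrix.det_smul]
    exact (IsUnit.pow _ hz0.isUnit).mul ((Matrix.isUnit_iff_isUnit_det _).mp hspec)
  refine ⟨hinv, ?_⟩
  -- block relations
  have hrel := (Matrix.mem_unitaryGroup_iff').mp h_unitary
  rw [star_eq_conjTranspose, fromBlocks_conjTranspose, fromBlocks_multiply,
    ← fromBlocks_one] at hrel
  have hCC : Cᴴ * C = 1 - Aᴴ * A := by
    have := congrArg Matrix.toBlocks₁₁ hrel
    simp only [toBlocks_fromBlocks₁₁] at this
    linear_combination (norm := module) this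
  have hCD : Cᴴ * D = -(Aᴴ * B) := by
    have := congrArg Matrix.toBlocks₁₂ hrel
    simp only [toBlocks_fromBlocks₁₂] at this
    linear_combination (norm := module) this
  have hDC : Dᴴ * C = -(Bᴴ * A) := by
    have := congrArg Matrix.toBlocks₂₁ hrel
    simp only [toBlocks_fromBlocks₂₁] at this
    linear_combination (norm := module) this
  have hDD : Dᴴ * D = 1 - Bᴴ * B := by
    have := congrArg Matrix.toBlocks₂₂ hrel
    simp only [toBlocks_fromBlocks₂₂] at this
    linear_combination (norm := module) this
  -- inverse facts
  set F : Matrix (Fin n) (Fin n) ℂ := (1 - z • A)⁻¹ with hF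
  have hdet : IsUnit (1 - z • A).det := (Matrix.isUnit_iff_isUnit_det _).mp hinv
  have hGF : (1 - z • A) * F = 1 := Matrix.mul_nonsing_inv _ hdet
  have hFG : F * (1 - z • A) = 1 := Matrix.nonsing_inv_mul _ hdet
  set G : Matrix (Fin n) (Fin n) ℂ := 1 - z • A with hG
  have hGH : Gᴴ = 1 - star z • Aᴴ := by
    rw [hG, conjTranspose_sub, conjTranspose_one, conjTranspose_smul]
  have hFGH : Gᴴ * Fᴴ = 1 := by rw [← conjTranspose_mul, hFG, conjTranspose_one]
  have hGFH : Fᴴ * Gᴴ = 1 := by rw [← conjTranspose_mul, hGF, conjTranspose_one]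
  -- main identity
  have hmain : Fᴴ * (1 - Aᴴ * A) * F = 1 + z • (A * F) + star z • (Fᴴ * Aᴴ) := by
    have cancel : ∀ X Y : Matrix (Fin n) (Fin n) ℂ, Gᴴ * X * G = Gᴴ * Y * G → X = Y := by
      intro X Y h
      have h2 := congrArg (fun M => Fᴴ * M * F) h
      simpa [Matrix.mul_assoc, ← Matrix.mul_assoc Fᴴ Gᴴ, hGFH,
        Matrix.mul_assoc G, ← Matrix.mul_assoc _ G F, hGF] using h2
    apply cancel
    have e1 : Gᴴ * (Fᴴ * (1 - Aᴴ * A) * F) * G = 1 - Aᴴ * A := by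
      calc Gᴴ * (Fᴴ * (1 - Aᴴ * A) * F) * G
          = (Gᴴ * Fᴴ) * (1 - Aᴴ * A) * (F * G) := by
            simp only [Matrix.mul_assoc]
        _ = 1 - Aᴴ * A := by rw [hFGH, hFG]; simp
    have e2 : Gᴴ * (1 + z • (A * F) + star z • (Fᴴ * Aᴴ)) * G = 1 - Aᴴ * A := by
      have t2 : Gᴴ * (z • (A * F)) * G = z • (Gᴴ * A) := by
        rw [Matrix.mul_smul, Matrix.smul_mul, Matrix.mul_assoc, Matrix.mul_assoc, hFG,
          Matrix.mul_one]
      have t3 : Gᴴ * (star z • (Fᴴ * Aᴴ)) * G = star z • (Aᴴ * G) := by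
        rw [Matrix.mul_smul, Matrix.smul_mul, ← Matrix.mul_assoc, hFGH, Matrix.one_mul]
      rw [Matrix.mul_add, Matrix.mul_add, Matrix.add_mul, Matrix.add_mul, Matrix.mul_one, t2, t3]
      rw [hGH, hG]
      simp only [Matrix.sub_mul, Matrix.mul_sub, Matrix.smul_mul, Matrix.mul_smul,
        Matrix.one_mul, Matrix.mul_one, smul_smul, smul_sub, hzz, hzz']
      module
    rw [e1, e2]
  -- final computation
  rw [Matrix.mem_unitaryGroup_iff']
  rw [star_eq_conjTranspose, conjTranspose_add, conjTranspose_smul, conjTranspose_mul,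
    conjTranspose_mul]
  have step1 : (Dᴴ + star z • (Bᴴ * (Fᴴ * Cᴴ))) * (D + z • (C * F * B))
      = Dᴴ * D + z • ((Dᴴ * C) * (F * B)) + star z • ((Bᴴ * Fᴴ) * (Cᴴ * D))
        + (star z * z) • (Bᴴ * (Fᴴ * (1 - Aᴴ * A) * F) * B) := by
    rw [← hCC]
    simp only [Matrix.add_mul, Matrix.mul_add, Matrix.mul_smul, Matrix.smul_mul, smul_smul,
      Matrix.mul_assoc]
    module
  rw [step1, hmain, hDC, hCD, hDD, hzz]
  simp only [Matrix.add_mul, Matrix.mul_add, Matrix.mul_smul, Matrix.smul_mul, smul_smul,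
    Matrix.mul_one, Matrix.one_mul, Matrix.neg_mul, Matrix.mul_neg, one_smul, smul_neg,
    Matrix.mul_assoc]
  module
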